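/- arXiv:1502.02137 — 2 statements merged into one kernel-verified Lean document; each statement's English description precedes it below -/
import Mathlib

section
/- The number of solutions (x₁,x₂,x₃,y₁,y₂,y₃) ∈ F³ × (𝔽_p \ {0})³ of the system y₁x₁² + y₂x₂² + y₃x₃² = 0, y₁x₁^{d₁} + y₂x₂^{d₁} + y₃x₃^{d₁} = 0 and y₁x₁^{d₂} + y₂x₂^{d₂} + y₃x₃^{d₂} = 0 is (p-1)³·(p^{m+1} + p^m − p); in particular it equals the number of solutions of the system consisting of only the first two equations. -/
open Finset
open scoped Classical
set_option linter.unusedSectionVars false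
set_option maxHeartbeats 1000000

section Aux

variable {p : ℕ} [Fact p.Prime] {F : Type} [Field F] [Fintype F] [Algebra (ZMod p) F]

private lemma iota_inj : Function.Injective (algebraMap (ZMod p) F) :=
  (algebraMap (ZMod p) F).injective

private lemma iota_pow_frob (c : ZMod p) (j : ℕ) :
    (algebraMap (ZMod p) F c) ^ p ^ j = algebraMap (ZMod p) F c := by
  induction j with
  | zero => simp
  | succ n ih => rw [pow_succ, pow_mul, ih, ← map_pow, ZMod.pow_card]

private lemma fixp_mem (z : F) (hz : z ^ p = z) : ∃ c : ZMod p, algebraMap (ZMod p) F c = z := by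
  classical
  have hp2 : 1 < p := (Fact.out : p.Prime).one_lt
  set f : Polynomial F := Polynomial.X ^ p - Polynomial.X with hf
  have hdeg : f.degree = p := by
    rw [hf]
    have h1 : (Polynomial.X : Polynomial F).degree < (Polynomial.X ^ p : Polynomial F).degree := by
      rw [Polynomial.degree_X_pow, Polynomial.degree_X]
      exact_mod_cast hp2
    rw [Polynomial.degree_sub_eq_left_of_degree_lt h1, Polynomial.degree_X_pow]
  have hf0 : f ≠ 0 := by
    intro h
    rw [h, Polynomial.degree_zero] at hdeg
    exact absurd hdeg (by simp)
  have hnd : f.natDegree = p := Polynomial.natDegree_eq_of_degree_eq_some hdeg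
  set S : Finset F := univ.filter fun z : F => z ^ p = z with hS
  set I : Finset F := univ.image (algebraMap (ZMod p) F) with hI
  have hsub : I ⊆ S := by
    intro z hz
    simp only [hI, mem_image, mem_univ, true_and] at hz
    obtain ⟨c, rfl⟩ := hz
    simp only [hS, mem_filter, mem_univ, true_and]
    rw [← map_pow, ZMod.pow_card]
  have hSroots : S ⊆ f.roots.toFinset := by
    intro z hz
    simp only [hS, mem_filter, mem_univ, true_and] at hz
    rw [Multiset.mem_toFinset, Polynomial.mem_roots hf0]
    simp [hf, Polynomial.IsRoot, sub_eq_zero, hz]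
  have hcardS : S.card ≤ p := by
    calc S.card ≤ f.roots.toFinset.card := card_le_card hSroots
    _ ≤ Multiset.card f.roots := Multiset.toFinset_card_le _
    _ ≤ f.natDegree := Polynomial.card_roots' f
    _ = p := hnd
  have hcardI : I.card = p := by
    rw [hI, card_image_of_injective _ iota_inj, card_univ, ZMod.card]
  have hIS : I = S := eq_of_subset_of_card_le hsub (hcardS.trans hcardI.ge)
  have : z ∈ I := by
    rw [hIS]; simp only [hS, mem_filter, mem_univ, true_and]; exact hz
  simpa only [hI, mem_image, mem_univ, true_and] using this

private lemma fixk_mem {m k : ℕ} (hF : Fintype.card F = p ^ m) (hm : 1 < m)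
    (hgcd : Nat.gcd m k = 1) (z : F) (hz : z ^ p ^ k = z) :
    ∃ c : ZMod p, algebraMap (ZMod p) F c = z := by
  have hmulk : ∀ a : ℕ, z ^ p ^ (a * k) = z := by
    intro a; induction a with
    | zero => simp
    | succ n ih => rw [Nat.succ_mul, pow_add, pow_mul, ih, hz]
  have hcard : ∀ w : F, w ^ p ^ m = w := fun w => by
    rw [← hF]; exact FiniteField.pow_card w
  have hmulm : ∀ b : ℕ, z ^ p ^ (b * m) = z := by
    intro b; induction b with
    | zero => simp
    | succ n ih => rw [Nat.succ_mul, pow_add, pow_mul, ih, hcard]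
  obtain ⟨a, -, ha⟩ := Nat.exists_mul_mod_eq_one_of_coprime (Nat.coprime_comm.mp hgcd) hm
  have hdm : k * a = m * (k * a / m) + 1 := by
    conv_lhs => rw [← Nat.div_add_mod (k * a) m, ha]
  have h4 : z ^ p ^ (m * (k * a / m)) = z := by rw [mul_comm]; exact hmulm _
  have key : z ^ p = z := by
    calc z ^ p = (z ^ p ^ (m * (k * a / m))) ^ p := by rw [h4]
    _ = z ^ (p ^ (m * (k * a / m)) * p) := (pow_mul z _ p).symm
    _ = z ^ p ^ (m * (k * a / m) + 1) := by rw [pow_succ]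
    _ = z := by rw [← hdm, mul_comm k a]; exact hmulk a
  exact fixp_mem z key

end Aux

section Line

variable (p : ℕ) [Fact p.Prime] (F : Type) [Field F] [Algebra (ZMod p) F]

/-- `x` is a scalar multiple of an `𝔽_p`-point of the conic `∑ yᵢ cᵢ² = 0`. -/
private def IsLine (y : Fin 3 → ZMod p) (x : Fin 3 → F) : Prop :=
  ∃ t : F, ∃ c : Fin 3 → ZMod p,
    (∀ i, x i = t * algebraMap (ZMod p) F (c i)) ∧ ∑ i, y i * c i ^ 2 = 0

variable {p F}

private lemma line_eq_gen {y : Fin 3 → ZMod p} {x : Fin 3 → F} (h : IsLine p F y x)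
    (e : ℕ) (he : ∀ c : ZMod p, (algebraMap (ZMod p) F c) ^ e = (algebraMap (ZMod p) F c) ^ 2) :
    ∑ i, algebraMap (ZMod p) F (y i) * x i ^ e = 0 := by
  obtain ⟨t, c, hx, hc⟩ := h
  have : ∀ i, algebraMap (ZMod p) F (y i) * x i ^ e
      = t ^ e * algebraMap (ZMod p) F (y i * c i ^ 2) := by
    intro i
    rw [hx i, mul_pow, he, map_mul, map_pow]
    ring
  rw [Finset.sum_congr rfl fun i _ => this i, ← Finset.mul_sum, ← map_sum, hc, map_zero, mul_zero]

private lemma line_eqs [Fintype F] {y : Fin 3 → ZMod p} {x : Fin 3 → F} (h : IsLine p F y x)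
    (k : ℕ) :
    (∑ i, algebraMap (ZMod p) F (y i) * x i ^ 2 = 0) ∧
    (∑ i, algebraMap (ZMod p) F (y i) * x i ^ (p ^ k + 1) = 0) ∧
    (∑ i, algebraMap (ZMod p) F (y i) * x i ^ (p ^ (2 * k) + 1) = 0) := by
  refine ⟨line_eq_gen h 2 fun c => rfl, line_eq_gen h _ fun c => ?_, line_eq_gen h _ fun c => ?_⟩
  · rw [pow_succ, iota_pow_frob, sq]
  · rw [pow_succ, iota_pow_frob, sq]

/-- The key structure lemma: any solution of the first two equations lies on a line. -/
private lemma line_of_eqs [Fintype F] {m k : ℕ} (hF : Fintype.card F = p ^ m) (hm : 1 < m)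
    (hgcd : Nat.gcd m k = 1) {y : Fin 3 → ZMod p} (hy : ∀ i, y i ≠ 0) {x : Fin 3 → F}
    (e1 : ∑ i, algebraMap (ZMod p) F (y i) * x i ^ 2 = 0)
    (e2 : ∑ i, algebraMap (ZMod p) F (y i) * x i ^ (p ^ k + 1) = 0) :
    IsLine p F y x := by
  have hp2 : 1 < p := (Fact.out : p.Prime).one_lt
  set ι := algebraMap (ZMod p) F with hι
  have hι0 : ∀ c : ZMod p, ι c = 0 → c = 0 := fun c hc => by
    apply iota_inj (F := F); rw [map_zero]; exact hc
  have hY : ∀ i, ι (y i) ≠ 0 := fun i h => hy i (hι0 _ h)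
  rw [Fin.sum_univ_three] at e1 e2
  by_cases h0 : x 0 = 0
  · by_cases h1 : x 1 = 0
    · by_cases h2 : x 2 = 0
      · exact ⟨0, 0, fun i => by fin_cases i <;> simp [h0, h1, h2], by simp⟩
      · exfalso
        rw [h0, h1] at e1
        simp only [ne_eq, zero_pow, mul_zero, zero_add, two_ne_zero, not_false_iff] at e1
        have : ι (y 2) * x 2 ^ 2 = 0 := by simpa using e1
        rcases mul_eq_zero.mp this with h | h
        · exact hY 2 h
        · exact h2 ((pow_eq_zero_iff two_ne_zero).mp h)
    · -- x 0 = 0, x 1 ≠ 0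
      set v : F := x 2 * (x 1)⁻¹ with hv
      have hx2 : x 2 = v * x 1 := by rw [hv, mul_assoc, inv_mul_cancel₀ h1, mul_one]
      have E1 : ι (y 1) + ι (y 2) * v ^ 2 = 0 := by
        have h : (ι (y 1) + ι (y 2) * v ^ 2) * x 1 ^ 2 = 0 := by
          rw [h0, hx2] at e1; linear_combination e1
        rcases mul_eq_zero.mp h with h | h
        · exact h
        · exact absurd ((pow_eq_zero_iff two_ne_zero).mp h) h1
      have E2b : ι (y 1) + ι (y 2) * v ^ (p ^ k + 1) = 0 := by
        have h : (ι (y 1) + ι (y 2) * v ^ (p ^ k + 1)) * x 1 ^ (p ^ k + 1) = 0 := by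
          rw [h0, hx2] at e2
          have hz0 : (0 : F) ^ (p ^ k + 1) = 0 := zero_pow (Nat.succ_ne_zero _)
          rw [hz0] at e2
          rw [mul_pow] at e2
          linear_combination e2
        rcases mul_eq_zero.mp h with h | h
        · exact h
        · exact absurd (pow_eq_zero_iff (Nat.succ_ne_zero _) |>.mp h) h1
      have hveq : ι (y 2) * v ^ (p ^ k + 1) = ι (y 2) * v ^ 2 := by linear_combination E2b - E1
      have hvq : v ^ p ^ k = v := by
        by_cases hv0 : v = 0
        · rw [hv0]; exact zero_pow (by positivity : (0:ℕ) < p ^ k).ne'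
        · have h2 : v ^ (p ^ k + 1) = v ^ 2 := mul_left_cancel₀ (hY 2) hveq
          rw [pow_succ, sq] at h2
          exact mul_right_cancel₀ hv0 h2
      obtain ⟨v', hv'⟩ := fixk_mem hF hm hgcd v hvq
      refine ⟨x 1, ![0, 1, v'], fun i => ?_, ?_⟩
      · fin_cases i
        · simp [h0]
        · simp
        · show x 2 = x 1 * ι v'
          rw [hx2, hv']; ring
      · apply iota_inj (F := F)
        rw [Fin.sum_univ_three, map_zero]
        simp only [Matrix.cons_val_zero, Matrix.cons_val_one, Matrix.head_cons,
          Matrix.cons_val_two, Matrix.tail_cons, map_add, map_mul, map_pow, map_zero, map_one,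
          hv']
        linear_combination E1
  · -- main case : x 0 ≠ 0
    haveI : CharP F p := charP_of_injective_algebraMap (iota_inj (p := p) (F := F)) p
    obtain ⟨u, hud⟩ : ∃ u : F, u = x 1 * (x 0)⁻¹ := ⟨_, rfl⟩
    obtain ⟨v, hvd⟩ : ∃ v : F, v = x 2 * (x 0)⁻¹ := ⟨_, rfl⟩
    have hx1 : x 1 = u * x 0 := by rw [hud, mul_assoc, inv_mul_cancel₀ h0, mul_one]
    have hx2 : x 2 = v * x 0 := by rw [hvd, mul_assoc, inv_mul_cancel₀ h0, mul_one]
    have E1 : ι (y 0) + ι (y 1) * u ^ 2 + ι (y 2) * v ^ 2 = 0 := by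
      have h : (ι (y 0) + ι (y 1) * u ^ 2 + ι (y 2) * v ^ 2) * x 0 ^ 2 = 0 := by
        rw [hx1, hx2] at e1; linear_combination e1
      rcases mul_eq_zero.mp h with h | h
      · exact h
      · exact absurd ((pow_eq_zero_iff two_ne_zero).mp h) h0
    have E2 : ι (y 0) + ι (y 1) * u ^ (p ^ k + 1) + ι (y 2) * v ^ (p ^ k + 1) = 0 := by
      have h : (ι (y 0) + ι (y 1) * u ^ (p ^ k + 1) + ι (y 2) * v ^ (p ^ k + 1))
          * x 0 ^ (p ^ k + 1) = 0 := by
        rw [hx1, hx2, mul_pow, mul_pow] at e2; linear_combination e2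
      rcases mul_eq_zero.mp h with h | h
      · exact h
      · exact absurd (pow_eq_zero_iff (Nat.succ_ne_zero _) |>.mp h) h0
    obtain ⟨w, hw⟩ : ∃ w : F, w = u ^ p ^ k := ⟨_, rfl⟩
    obtain ⟨z, hz⟩ : ∃ z : F, z = v ^ p ^ k := ⟨_, rfl⟩
    have hqk0 : p ^ k ≠ 0 := (by positivity : (0:ℕ) < p ^ k).ne'
    have E2' : ι (y 0) + ι (y 1) * (w * u) + ι (y 2) * (z * v) = 0 := by
      rw [hw, hz, ← pow_succ, ← pow_succ]
      exact E2
    have E1q : ι (y 0) + ι (y 1) * w ^ 2 + ι (y 2) * z ^ 2 = 0 := by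
      have hfr : ∀ a b c : F, (a + b + c) ^ p ^ k = a ^ p ^ k + b ^ p ^ k + c ^ p ^ k :=
        fun a b c => by rw [add_pow_char_pow, add_pow_char_pow]
      have h2 : (ι (y 0)) ^ p ^ k + (ι (y 1) * u ^ 2) ^ p ^ k + (ι (y 2) * v ^ 2) ^ p ^ k = 0 := by
        rw [← hfr, E1]
        exact zero_pow hqk0
      have e0 : (ι (y 0) : F) ^ p ^ k = ι (y 0) := iota_pow_frob _ _
      have ea : (ι (y 1) * u ^ 2) ^ p ^ k = ι (y 1) * w ^ 2 := by
        rw [mul_pow, iota_pow_frob, hw, ← pow_mul, ← pow_mul]; ring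
      have eb : (ι (y 2) * v ^ 2) ^ p ^ k = ι (y 2) * z ^ 2 := by
        rw [mul_pow, iota_pow_frob, hz, ← pow_mul, ← pow_mul]; ring
      rw [e0, ea, eb] at h2
      exact h2
    have main : w = u ∧ z = v := by
      by_cases hzv : z = v
      · have h : ι (y 1) * (u * (w - u)) = 0 := by
          rw [hzv] at E2'; linear_combination E2' - E1
        have h2 := (mul_eq_zero.mp h).resolve_left (hY 1)
        rcases mul_eq_zero.mp h2 with hu0 | hwu
        · exact ⟨by rw [hw, hu0, zero_pow hqk0], hzv⟩
        · exact ⟨sub_eq_zero.mp hwu, hzv⟩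
      · exfalso
        by_cases hwu : w = u
        · have h : ι (y 2) * (v * (z - v)) = 0 := by
            rw [hwu] at E2'; linear_combination E2' - E1
          have h2 := (mul_eq_zero.mp h).resolve_left (hY 2)
          rcases mul_eq_zero.mp h2 with hv0 | hzv'
          · exact hzv (by rw [hz, hv0, zero_pow hqk0])
          · exact hzv (sub_eq_zero.mp hzv')
        · have hdet : ι (y 2) * ((z - v) * (v * w - u * z)) = 0 := by
            linear_combination (w + u) * E2' - (w + u) * E1 - u * E1q + u * E1
          have h2 := (mul_eq_zero.mp hdet).resolve_left (hY 2)
          rcases mul_eq_zero.mp h2 with hzv' | hvw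
          · exact hzv (sub_eq_zero.mp hzv')
          have hvw' : v * w = u * z := sub_eq_zero.mp hvw
          have hu0 : u ≠ 0 := fun h => hwu (by rw [hw, h, zero_pow hqk0])
          have hv0 : v ≠ 0 := fun h => hzv (by rw [hz, h, zero_pow hqk0])
          obtain ⟨lv, hlv⟩ : ∃ l : F, l = u * v⁻¹ := ⟨_, rfl⟩
          have hu : u = lv * v := by rw [hlv, mul_assoc, inv_mul_cancel₀ hv0, mul_one]
          have hwz : w = lv * z := by
            rw [hlv]
            field_simp
            linear_combination hvw'
          have hcomb : (ι (y 1) * lv ^ 2 + ι (y 2)) * (v * (z - v)) = 0 := by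
            linear_combination E2' - E1 + ι (y 1) * (u + lv * v - lv * z) * hu
              - ι (y 1) * u * hwz
          have hy12 : ι (y 1) * lv ^ 2 + ι (y 2) = 0 := by
            rcases mul_eq_zero.mp hcomb with h | h
            · exact h
            · rcases mul_eq_zero.mp h with h | h
              · exact absurd h hv0
              · exact absurd (sub_eq_zero.mp h) hzv
          exact hY 0 (by linear_combination E1 - v ^ 2 * hy12 - ι (y 1) * (u + lv * v) * hu)
    obtain ⟨u', hu'⟩ := fixk_mem hF hm hgcd u (by rw [← hw, main.1])
    obtain ⟨v', hv'⟩ := fixk_mem hF hm hgcd v (by rw [← hz, main.2])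
    refine ⟨x 0, ![1, u', v'], fun i => ?_, ?_⟩
    · fin_cases i
      · simp
      · show x 1 = x 0 * ι u'
        rw [hx1, hu']; ring
      · show x 2 = x 0 * ι v'
        rw [hx2, hv']; ring
    · apply iota_inj (F := F)
      rw [Fin.sum_univ_three, map_zero]
      simp only [Matrix.cons_val_zero, Matrix.cons_val_one, Matrix.head_cons,
        Matrix.cons_val_two, Matrix.tail_cons, map_add, map_mul, map_pow, map_one, one_pow,
        hu', hv']
      linear_combination E1

end Line


section CharSum

variable {p : ℕ} [Fact p.Prime]

private lemma ringchar_ne (hp2 : p ≠ 2) : ringChar (ZMod p) ≠ 2 := by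
  rw [ZMod.ringChar_zmod_n]; exact hp2

/-- number of square roots -/
private lemma sqrts_card (hp2 : p ≠ 2) (b : ZMod p) :
    ((univ.filter fun v : ZMod p => v ^ 2 = b).card : ℤ) = quadraticChar (ZMod p) b + 1 := by
  have := quadraticChar_card_sqrts (ringchar_ne hp2) b
  rw [← this]
  congr 1
  rw [Set.toFinset_setOf]

private lemma chi_sum_shift (hp2 : p ≠ 2) {d : ZMod p} (hd : d ≠ 0) :
    ∑ x : ZMod p, quadraticChar (ZMod p) x * quadraticChar (ZMod p) (x + d) = -1 := by
  classical
  set χ := quadraticChar (ZMod p) with hχ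
  have h0 : χ 0 * χ (0 + d) = 0 := by rw [MulChar.map_zero, zero_mul]
  rw [← Finset.add_sum_erase _ _ (mem_univ (0 : ZMod p)), h0, zero_add]
  have key : ∀ x ∈ univ.erase (0 : ZMod p), χ x * χ (x + d) = χ (1 + d * x⁻¹) := by
    intro x hx
    have hx0 : x ≠ 0 := (mem_erase.mp hx).1
    have : x + d = x * (1 + d * x⁻¹) := by field_simp
    rw [this, map_mul, ← mul_assoc, ← map_mul, ← sq, quadraticChar_sq_one' hx0, one_mul]
  rw [Finset.sum_congr rfl key]
  have hbij : ∑ x ∈ univ.erase (0 : ZMod p), χ (1 + d * x⁻¹)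
      = ∑ t ∈ univ.erase (1 : ZMod p), χ t := by
    apply Finset.sum_nbij' (i := fun x => 1 + d * x⁻¹) (j := fun t => d * (t - 1)⁻¹)
    · intro a ha
      have ha0 : a ≠ 0 := (mem_erase.mp ha).1
      simp only [mem_erase, mem_univ, and_true]
      intro hcon
      have : d * a⁻¹ = 0 := by linear_combination hcon
      exact hd (by
        rcases mul_eq_zero.mp this with h | h
        · exact h
        · exact absurd (inv_eq_zero.mp h) ha0)
    · intro t ht
      have ht1 : t ≠ 1 := (mem_erase.mp ht).1
      simp only [mem_erase, mem_univ, and_true]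
      intro hcon
      rcases mul_eq_zero.mp hcon with h | h
      · exact hd h
      · exact ht1 (sub_eq_zero.mp (inv_eq_zero.mp h))
    · intro a ha
      have ha0 : a ≠ 0 := (mem_erase.mp ha).1
      field_simp
      simp [hd]
    · intro t ht
      have ht1 : t ≠ 1 := (mem_erase.mp ht).1
      have : t - 1 ≠ 0 := sub_ne_zero.mpr ht1
      field_simp
      ring
    · intro a ha; rfl
  rw [hbij]
  have : ∑ t ∈ univ.erase (1 : ZMod p), χ t = (∑ t : ZMod p, χ t) - χ 1 := by
    rw [← Finset.add_sum_erase _ _ (mem_univ (1 : ZMod p))]; ring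
  rw [this, quadraticChar_sum_zero (ringchar_ne hp2), MulChar.map_one]
  ring

end CharSum

section CharSum2

variable {p : ℕ} [Fact p.Prime]

private lemma chi_sum_quad (hp2 : p ≠ 2) {a : ZMod p} (ha : a ≠ 0) (d : ZMod p) :
    ∑ u : ZMod p, quadraticChar (ZMod p) (d - a * u ^ 2)
      = if d = 0 then (quadraticChar (ZMod p) (-a)) * ((p : ℤ) - 1)
        else - quadraticChar (ZMod p) (-a) := by
  classical
  set χ := quadraticChar (ZMod p) with hχ
  have h1 : ∑ u : ZMod p, χ (d - a * u ^ 2)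
      = ∑ b : ZMod p, ((univ.filter fun u : ZMod p => u ^ 2 = b).card : ℤ) * χ (d - a * b) := by
    rw [← Finset.sum_fiberwise' univ (fun u : ZMod p => u ^ 2) (fun b => χ (d - a * b))]
    exact Finset.sum_congr rfl fun b _ => by rw [Finset.sum_const, nsmul_eq_mul]
  rw [h1]
  have h2 : ∀ b : ZMod p, ((univ.filter fun u : ZMod p => u ^ 2 = b).card : ℤ) * χ (d - a * b)
      = χ b * χ (d - a * b) + χ (d - a * b) := by
    intro b; rw [sqrts_card hp2]; ring
  rw [Finset.sum_congr rfl fun b _ => h2 b, Finset.sum_add_distrib]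
  have h3 : ∑ b : ZMod p, χ (d - a * b) = 0 := by
    have hbij : Function.Bijective (fun b : ZMod p => d - a * b) := by
      constructor
      · intro b1 b2 h
        simp only at h
        have h' : a * b1 = a * b2 := by linear_combination -h
        exact mul_left_cancel₀ ha h'
      · intro c
        refine ⟨a⁻¹ * (d - c), ?_⟩
        field_simp
        ring
    calc ∑ b : ZMod p, χ (d - a * b) = ∑ c : ZMod p, χ c :=
      Fintype.sum_bijective _ hbij _ _ (fun b => rfl)
    _ = 0 := quadraticChar_sum_zero (ringchar_ne hp2)
  rw [h3, add_zero]
  have key : ∀ b : ZMod p, χ b * χ (d - a * b) = χ (-a) * (χ b * χ (b + -(d * a⁻¹))) := by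
    intro b
    have h : d - a * b = -a * (b + -(d * a⁻¹)) := by field_simp; ring
    rw [h, map_mul]; ring
  rw [Finset.sum_congr rfl fun b _ => key b, ← Finset.mul_sum]
  by_cases hd : d = 0
  · rw [if_pos hd, hd]
    have hsq : ∑ b : ZMod p, χ b * χ (b + -(0 * a⁻¹)) = (p : ℤ) - 1 := by
      simp only [zero_mul, neg_zero, add_zero]
      rw [← Finset.add_sum_erase _ _ (mem_univ (0 : ZMod p))]
      rw [MulChar.map_zero, zero_mul, zero_add]
      have : ∀ b ∈ univ.erase (0 : ZMod p), χ b * χ b = 1 := by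
        intro b hb
        have hb0 : b ≠ 0 := (mem_erase.mp hb).1
        rw [← map_mul, ← sq, quadraticChar_sq_one' hb0]
      rw [Finset.sum_congr rfl this, Finset.sum_const, card_erase_of_mem (mem_univ _),
        card_univ, ZMod.card]
      have h1p : 1 ≤ p := (Fact.out : p.Prime).one_lt.le
      rw [nsmul_eq_mul, mul_one]
      omega
    rw [hsq]
  · rw [if_neg hd]
    have hd' : -(d * a⁻¹) ≠ 0 := neg_ne_zero.mpr (mul_ne_zero hd (inv_ne_zero ha))
    rw [chi_sum_shift hp2 hd']
    ring

private lemma binary_count (hp2 : p ≠ 2) {a b : ZMod p} (ha : a ≠ 0) (hb : b ≠ 0) (d : ZMod p) :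
    ((univ.filter fun t : ZMod p × ZMod p => a * t.1 ^ 2 + b * t.2 ^ 2 = d).card : ℤ)
      = if d = 0 then (p : ℤ) + ((p : ℤ) - 1) * quadraticChar (ZMod p) (-(a * b))
        else (p : ℤ) - quadraticChar (ZMod p) (-(a * b)) := by
  classical
  set χ := quadraticChar (ZMod p) with hχ
  have hbb : b * b⁻¹ = 1 := mul_inv_cancel₀ hb
  have hsplit : ∀ u : ZMod p, (∑ v : ZMod p, if a * u ^ 2 + b * v ^ 2 = d then (1 : ℤ) else 0)
      = 1 + χ (b⁻¹ * d - b⁻¹ * a * u ^ 2) := by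
    intro u
    have hiff : ∀ v : ZMod p,
        (a * u ^ 2 + b * v ^ 2 = d) ↔ (v ^ 2 = b⁻¹ * d - b⁻¹ * a * u ^ 2) := by
      intro v
      constructor
      · intro h; linear_combination b⁻¹ * h - v ^ 2 * hbb
      · intro h; linear_combination b * h - (a * u ^ 2 - d) * hbb
    rw [Finset.sum_congr rfl (fun v _ => if_congr (hiff v) rfl rfl), Finset.sum_boole,
      sqrts_card hp2]
    ring
  have h1 : ((univ.filter fun t : ZMod p × ZMod p => a * t.1 ^ 2 + b * t.2 ^ 2 = d).card : ℤ)
      = ∑ t : ZMod p × ZMod p, if a * t.1 ^ 2 + b * t.2 ^ 2 = d then (1 : ℤ) else 0 := by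
    rw [Finset.sum_boole]
  rw [h1, Fintype.sum_prod_type, Finset.sum_congr rfl fun u _ => hsplit u,
    Finset.sum_add_distrib, Finset.sum_const, card_univ, ZMod.card]
  have ha' : b⁻¹ * a ≠ 0 := mul_ne_zero (inv_ne_zero hb) ha
  have hcq := chi_sum_quad hp2 ha' (b⁻¹ * d)
  have hchi : χ (-(b⁻¹ * a)) = χ (-(a * b)) := by
    have h : -(b⁻¹ * a) = -(a * b) * (b⁻¹) ^ 2 := by field_simp
    rw [h, map_mul, quadraticChar_sq_one' (inv_ne_zero hb), mul_one]
  rw [hcq] at *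
  by_cases hd : d = 0
  · rw [if_pos hd, if_pos (by rw [hd, mul_zero]), hchi]
    ring
  · rw [if_neg hd, if_neg (fun h => hd (by
      have := congrArg (fun t => b * t) h
      simpa [← mul_assoc, hbb] using this)), hchi]
    ring

end CharSum2

section Conic

variable {p : ℕ} [Fact p.Prime]

private def e3 {K : Type} : (Fin 3 → K) ≃ K × K × K where
  toFun c := (c 2, c 0, c 1)
  invFun t := ![t.2.1, t.2.2, t.1]
  left_inv c := by funext i; fin_cases i <;> rfl
  right_inv t := rfl

private lemma conic_count (hp2 : p ≠ 2) {y : Fin 3 → ZMod p} (hy : ∀ i, y i ≠ 0) :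
    (univ.filter fun c : Fin 3 → ZMod p => ∑ i, y i * c i ^ 2 = 0).card = p ^ 2 := by
  classical
  set χ := quadraticChar (ZMod p) with hχ
  have h1p : 1 ≤ p := (Fact.out : p.Prime).one_lt.le
  have hcardeq : (univ.filter fun c : Fin 3 → ZMod p => ∑ i, y i * c i ^ 2 = 0).card
      = (univ.filter fun t : ZMod p × ZMod p × ZMod p =>
          y 0 * t.2.1 ^ 2 + y 1 * t.2.2 ^ 2 = -(y 2 * t.1 ^ 2)).card := by
    rw [← Fintype.card_subtype, ← Fintype.card_subtype]
    apply Fintype.card_congr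
    apply Equiv.subtypeEquiv e3
    intro c
    rw [Fin.sum_univ_three]
    show _ ↔ (y 0 * c 0 ^ 2 + y 1 * c 1 ^ 2 = -(y 2 * c 2 ^ 2))
    constructor <;> intro h <;> linear_combination h
  rw [hcardeq]
  have hinner : ∀ w : ZMod p,
      (∑ uv : ZMod p × ZMod p,
        if y 0 * uv.1 ^ 2 + y 1 * uv.2 ^ 2 = -(y 2 * w ^ 2) then (1 : ℤ) else 0)
      = if w = 0 then (p : ℤ) + ((p : ℤ) - 1) * χ (-(y 0 * y 1))
        else (p : ℤ) - χ (-(y 0 * y 1)) := by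
    intro w
    rw [Finset.sum_boole]
    have hbc := binary_count hp2 (hy 0) (hy 1) (-(y 2 * w ^ 2))
    rw [hbc]
    have hiff : (-(y 2 * w ^ 2) = 0) ↔ (w = 0) := by
      constructor
      · intro h
        have := neg_eq_zero.mp h
        rcases mul_eq_zero.mp this with h' | h'
        · exact absurd h' (hy 2)
        · exact (pow_eq_zero_iff two_ne_zero).mp h'
      · intro h; rw [h]; simp
    by_cases hw : w = 0
    · rw [if_pos (hiff.mpr hw), if_pos hw]
    · rw [if_neg (fun hcon => hw (hiff.mp hcon)), if_neg hw]
  have hzint : ((univ.filter fun t : ZMod p × ZMod p × ZMod p =>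
      y 0 * t.2.1 ^ 2 + y 1 * t.2.2 ^ 2 = -(y 2 * t.1 ^ 2)).card : ℤ) = (p : ℤ) ^ 2 := by
    rw [Finset.natCast_card_filter, Fintype.sum_prod_type]
    rw [Finset.sum_congr rfl fun w _ => hinner w]
    rw [← Finset.add_sum_erase _ _ (mem_univ (0 : ZMod p)), if_pos rfl]
    have herase : ∀ w ∈ univ.erase (0 : ZMod p),
        (if w = 0 then (p : ℤ) + ((p : ℤ) - 1) * χ (-(y 0 * y 1))
          else (p : ℤ) - χ (-(y 0 * y 1))) = (p : ℤ) - χ (-(y 0 * y 1)) := by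
      intro w hw
      rw [if_neg (mem_erase.mp hw).1]
    rw [Finset.sum_congr rfl herase, Finset.sum_const, card_erase_of_mem (mem_univ _),
      card_univ, ZMod.card, nsmul_eq_mul, Nat.cast_sub h1p]
    push_cast
    ring
  exact_mod_cast hzint

end Conic

section LineCount

variable {p : ℕ} [Fact p.Prime] {F : Type} [Field F] [Fintype F] [Algebra (ZMod p) F]

private lemma line_count (hp2 : p ≠ 2) {m : ℕ} (hF : Fintype.card F = p ^ m)
    {y : Fin 3 → ZMod p} (hy : ∀ i, y i ≠ 0) :
    (univ.filter fun x : Fin 3 → F => IsLine p F y x).card = (p + 1) * (p ^ m - 1) + 1 := by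
  classical
  have h1p : 1 < p := (Fact.out : p.Prime).one_lt
  set ι := algebraMap (ZMod p) F with hι
  set C : Finset (Fin 3 → ZMod p) :=
    univ.filter (fun c : Fin 3 → ZMod p => ∑ i, y i * c i ^ 2 = 0) with hCdef
  have hC : C.card = p ^ 2 := conic_count hp2 hy
  have h0C : (0 : Fin 3 → ZMod p) ∈ C := by
    rw [hCdef, mem_filter]
    refine ⟨mem_univ _, ?_⟩
    simp
  set C' : Finset (Fin 3 → ZMod p) := C.erase 0 with hC'def
  have hC' : C'.card = p ^ 2 - 1 := by rw [hC'def, card_erase_of_mem h0C, hC]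
  set Fs : Finset F := (univ : Finset F).erase 0 with hFsdef
  have hFs : Fs.card = p ^ m - 1 := by
    rw [hFsdef, card_erase_of_mem (mem_univ _), card_univ, hF]
  set π : (Fin 3 → ZMod p) × F → (Fin 3 → F) := fun ct => fun i => ct.2 * ι (ct.1 i) with hπdef
  set s : Finset ((Fin 3 → ZMod p) × F) := C' ×ˢ Fs with hsdef
  have hs : s.card = (p ^ 2 - 1) * (p ^ m - 1) := by rw [hsdef, card_product, hC', hFs]
  set D : Finset (Fin 3 → F) := s.image π with hDdef
  -- each fiber has p - 1 elements
  have hfiber : ∀ x ∈ D, (s.filter fun ct => π ct = x).card = p - 1 := by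
    intro x hx
    obtain ⟨ct₀, h₀, hπ₀⟩ := mem_image.mp hx
    obtain ⟨hc₀, ht₀⟩ := mem_product.mp h₀
    have hc₀0 : ct₀.1 ≠ 0 := (mem_erase.mp hc₀).1
    have hc₀C : ct₀.1 ∈ C := (mem_erase.mp hc₀).2
    have ht₀0 : ct₀.2 ≠ 0 := (mem_erase.mp ht₀).1
    have hj : ∃ j, ct₀.1 j ≠ 0 := by
      by_contra h; push_neg at h; exact hc₀0 (funext fun j => h j)
    obtain ⟨j, hj⟩ := hj
    have hbij : (univ.erase (0 : ZMod p)).card = (s.filter fun ct => π ct = x).card := by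
      apply Finset.card_bij (fun l _ => ((fun i => l * ct₀.1 i : Fin 3 → ZMod p), ι l⁻¹ * ct₀.2))
      · intro l hl
        have hl0 : l ≠ 0 := (mem_erase.mp hl).1
        refine mem_filter.mpr ⟨mem_product.mpr ⟨?_, ?_⟩, ?_⟩
        · refine mem_erase.mpr ⟨?_, ?_⟩
          · intro hcon
            have h := congrFun hcon j
            simp only [Pi.zero_apply] at h
            rcases mul_eq_zero.mp h with h' | h'
            · exact hl0 h'
            · exact hj h'
          · rw [hCdef, mem_filter]
            refine ⟨mem_univ _, ?_⟩
            have hc := (mem_filter.mp hc₀C).2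
            calc ∑ i, y i * (l * ct₀.1 i) ^ 2 = l ^ 2 * ∑ i, y i * ct₀.1 i ^ 2 := by
                  rw [Finset.mul_sum]; exact Finset.sum_congr rfl fun i _ => by ring
            _ = 0 := by rw [hc, mul_zero]
        · exact mem_erase.mpr ⟨mul_ne_zero ((map_ne_zero ι).mpr (inv_ne_zero hl0)) ht₀0,
            mem_univ _⟩
        · rw [← hπ₀]
          funext i
          show ι l⁻¹ * ct₀.2 * ι (l * ct₀.1 i) = ct₀.2 * ι (ct₀.1 i)
          have hone : (ι l⁻¹) * (ι l) = 1 := by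
            rw [← map_mul, inv_mul_cancel₀ hl0, map_one]
          calc ι l⁻¹ * ct₀.2 * ι (l * ct₀.1 i)
              = (ι l⁻¹ * ι l) * (ct₀.2 * ι (ct₀.1 i)) := by rw [map_mul]; ring
          _ = ct₀.2 * ι (ct₀.1 i) := by rw [hone, one_mul]
      · intro l1 h1 l2 h2 heq
        have h := congrArg (fun z : (Fin 3 → ZMod p) × F => z.1 j) heq
        simp only at h
        exact mul_right_cancel₀ hj h
      · intro ct hct
        obtain ⟨hmem, hπx⟩ := mem_filter.mp hct
        obtain ⟨hcC', htF'⟩ := mem_product.mp hmem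
        have hc0 : ct.1 ≠ 0 := (mem_erase.mp hcC').1
        have ht0 : ct.2 ≠ 0 := (mem_erase.mp htF').1
        have hpt : ∀ i, ct.2 * ι (ct.1 i) = ct₀.2 * ι (ct₀.1 i) := by
          intro i
          exact congrFun (hπx.trans hπ₀.symm) i
        have hrhs : ct₀.2 * ι (ct₀.1 j) ≠ 0 :=
          mul_ne_zero ht₀0 ((map_ne_zero ι).mpr hj)
        have hcj : ct.1 j ≠ 0 := by
          intro h; apply hrhs; rw [← hpt j, h, map_zero, mul_zero]
        have hbj : ι (ct₀.1 j) ≠ 0 := (map_ne_zero ι).mpr hj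
        have hl : ι (ct.1 j * (ct₀.1 j)⁻¹) = ct.2⁻¹ * ct₀.2 := by
          rw [map_mul, map_inv₀]
          have h := hpt j
          field_simp [hbj]
          linear_combination h
        refine ⟨ct.1 j * (ct₀.1 j)⁻¹,
          mem_erase.mpr ⟨mul_ne_zero hcj (inv_ne_zero hj), mem_univ _⟩, ?_⟩
        have hfst : (fun i => ct.1 j * (ct₀.1 j)⁻¹ * ct₀.1 i) = ct.1 := by
          funext i
          apply iota_inj (p := p) (F := F)
          rw [map_mul, hl]
          have h := hpt i
          field_simp
          linear_combination -h
        have hsnd : ι (ct.1 j * (ct₀.1 j)⁻¹)⁻¹ * ct₀.2 = ct.2 := by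
          rw [map_inv₀, hl]
          field_simp
        exact Prod.ext hfst hsnd
    rw [← hbij, card_erase_of_mem (mem_univ _), card_univ, ZMod.card]
  have hDcard : (p ^ 2 - 1) * (p ^ m - 1) = D.card * (p - 1) := by
    have h := Finset.card_eq_sum_card_image π s
    rw [Finset.sum_congr rfl hfiber, Finset.sum_const, smul_eq_mul] at h
    rw [← hs, h, hDdef]
  have hD : D.card = (p + 1) * (p ^ m - 1) := by
    have hfac : p ^ 2 - 1 = (p + 1) * (p - 1) := by
      obtain ⟨a, rfl⟩ : ∃ a, p = a + 1 := ⟨p - 1, by omega⟩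
      have h2 : (a + 1) ^ 2 = a * a + 2 * a + 1 := by ring
      have h3 : (a + 1 + 1) * (a + 1 - 1) = a * a + 2 * a := by
        simp only [Nat.add_sub_cancel]
        ring
      omega
    apply Nat.eq_of_mul_eq_mul_right (show 0 < p - 1 by omega)
    rw [← hDcard, hfac]
    ring
  have h0D : (0 : Fin 3 → F) ∉ D := by
    intro h
    obtain ⟨ct, hmem, hπx⟩ := mem_image.mp h
    obtain ⟨hcC', htF'⟩ := mem_product.mp hmem
    have hc0 : ct.1 ≠ 0 := (mem_erase.mp hcC').1
    have ht0 : ct.2 ≠ 0 := (mem_erase.mp htF').1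
    have hj : ∃ j, ct.1 j ≠ 0 := by
      by_contra hcon; push_neg at hcon; exact hc0 (funext fun i => hcon i)
    obtain ⟨j, hj⟩ := hj
    have h' := congrFun hπx j
    simp only [Pi.zero_apply] at h'
    exact mul_ne_zero ht0 ((map_ne_zero ι).mpr hj) h'
  have hset : univ.filter (fun x : Fin 3 → F => IsLine p F y x) = insert (0 : Fin 3 → F) D := by
    ext x
    simp only [mem_filter, mem_univ, true_and, mem_insert]
    constructor
    · rintro ⟨t, c, hx, hc⟩
      by_cases hx0 : x = 0
      · exact Or.inl hx0
      · refine Or.inr ?_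
        have hj : ∃ j, x j ≠ 0 := by
          by_contra hcon; push_neg at hcon; exact hx0 (funext fun i => hcon i)
        obtain ⟨j, hj⟩ := hj
        have ht : t ≠ 0 := fun h => hj (by rw [hx j, h, zero_mul])
        have hcj : c j ≠ 0 := fun h => hj (by rw [hx j, h, map_zero, mul_zero])
        refine mem_image.mpr ⟨(c, t), mem_product.mpr ⟨mem_erase.mpr ⟨?_, ?_⟩,
          mem_erase.mpr ⟨ht, mem_univ _⟩⟩, ?_⟩
        · intro h; exact hcj (congrFun h j)
        · rw [hCdef, mem_filter]; exact ⟨mem_univ _, hc⟩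
        · funext i; exact (hx i).symm
    · intro h
      rcases h with h0 | hD'
      · subst h0
        exact ⟨0, 0, fun i => by simp, by simp⟩
      · obtain ⟨ct, hmem, rfl⟩ := mem_image.mp hD'
        obtain ⟨hcC', htF'⟩ := mem_product.mp hmem
        exact ⟨ct.2, ct.1, fun i => rfl, (mem_filter.mp (mem_erase.mp hcC').2).2⟩
  rw [hset, card_insert_of_notMem h0D, hD]

end LineCount

section Total

variable {p : ℕ} [Fact p.Prime] {F : Type} [Field F] [Fintype F] [Algebra (ZMod p) F]

private lemma nonzero_count :
    (univ.filter fun y : Fin 3 → ZMod p => ∀ i, y i ≠ 0).card = (p - 1) ^ 3 := by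
  classical
  rw [← Fintype.card_subtype]
  rw [Fintype.card_congr (Equiv.subtypePiEquivPi (p := fun _ z => z ≠ 0)), Fintype.card_pi]
  have hne : Fintype.card {z : ZMod p // z ≠ 0} = p - 1 := by
    rw [← Fintype.card_congr (unitsEquivNeZero (G₀ := ZMod p))]
    exact ZMod.card_units p
  simp [hne]

private lemma total_count (hp2 : p ≠ 2) {m : ℕ} (hF : Fintype.card F = p ^ m) :
    (univ.filter fun sp : (Fin 3 → F) × (Fin 3 → ZMod p) =>
        (∀ i, sp.2 i ≠ 0) ∧ IsLine p F sp.2 sp.1).card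
      = (p - 1) ^ 3 * ((p + 1) * (p ^ m - 1) + 1) := by
  classical
  set P : (Fin 3 → F) × (Fin 3 → ZMod p) → Prop :=
    fun sp => (∀ i, sp.2 i ≠ 0) ∧ IsLine p F sp.2 sp.1 with hP
  set T : Finset (Fin 3 → ZMod p) := univ.filter (fun y => ∀ i, y i ≠ 0) with hT
  have hmap : ∀ sp ∈ univ.filter P, sp.2 ∈ T := by
    intro sp hsp
    rw [hT, mem_filter]
    exact ⟨mem_univ _, (mem_filter.mp hsp).2.1⟩
  rw [Finset.card_eq_sum_card_fiberwise hmap]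
  have hfib : ∀ y ∈ T, ((univ.filter P).filter fun sp => sp.2 = y).card
      = (p + 1) * (p ^ m - 1) + 1 := by
    intro y hyT
    have hy : ∀ i, y i ≠ 0 := (mem_filter.mp hyT).2
    have hbij : ((univ.filter P).filter fun sp => sp.2 = y).card
        = (univ.filter fun x : Fin 3 → F => IsLine p F y x).card := by
      apply Finset.card_bij (fun sp _ => sp.1)
      · intro sp hsp
        obtain ⟨hsp1, hsp2⟩ := mem_filter.mp hsp
        obtain ⟨_, hline⟩ := (mem_filter.mp hsp1).2
        rw [mem_filter]
        refine ⟨mem_univ _, ?_⟩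
        rw [← hsp2]
        exact hline
      · intro a ha b hb hab
        have ha2 := (mem_filter.mp ha).2
        have hb2 := (mem_filter.mp hb).2
        exact Prod.ext hab (ha2.trans hb2.symm)
      · intro x hx
        refine ⟨(x, y), ?_, rfl⟩
        rw [mem_filter]
        refine ⟨?_, rfl⟩
        rw [mem_filter]
        exact ⟨mem_univ _, hy, (mem_filter.mp hx).2⟩
    rw [hbij]
    exact line_count hp2 hF hy
  rw [Finset.sum_congr rfl hfib, Finset.sum_const, smul_eq_mul]
  rw [hT, nonzero_count]

end Total

/-- Remark after Lemma 3.3: the number of solutions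
`(x₁,x₂,x₃,y₁,y₂,y₃) ∈ F³ × (𝔽_p*)³` of the three equations
`y₁x₁² + y₂x₂² + y₃x₃² = 0`, `y₁x₁^{d₁} + y₂x₂^{d₁} + y₃x₃^{d₁} = 0` and
`y₁x₁^{d₂} + y₂x₂^{d₂} + y₃x₃^{d₂} = 0` is `(p-1)³·(p^{m+1} + p^m - p)`;
in particular it equals the number of solutions of the first two equations only. -/
theorem stmt_6 (p m k : ℕ) [Fact p.Prime] (hp : Odd p) (hm5 : 5 ≤ m) (hm : Odd m)
    (hk : 0 < k) (hgcd : Nat.gcd m k = 1)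
    (F : Type) [Field F] [Fintype F] [Algebra (ZMod p) F]
    (hF : Fintype.card F = p ^ m) :
    Nat.card {s : (Fin 3 → F) × (Fin 3 → ZMod p) //
      (∀ i, s.2 i ≠ 0) ∧
      ∑ i, algebraMap (ZMod p) F (s.2 i) * s.1 i ^ 2 = 0 ∧
      ∑ i, algebraMap (ZMod p) F (s.2 i) * s.1 i ^ (p ^ k + 1) = 0 ∧
      ∑ i, algebraMap (ZMod p) F (s.2 i) * s.1 i ^ (p ^ (2 * k) + 1) = 0} =
    (p - 1) ^ 3 * (p ^ (m + 1) + p ^ m - p) ∧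
    Nat.card {s : (Fin 3 → F) × (Fin 3 → ZMod p) //
      (∀ i, s.2 i ≠ 0) ∧
      ∑ i, algebraMap (ZMod p) F (s.2 i) * s.1 i ^ 2 = 0 ∧
      ∑ i, algebraMap (ZMod p) F (s.2 i) * s.1 i ^ (p ^ k + 1) = 0 ∧
      ∑ i, algebraMap (ZMod p) F (s.2 i) * s.1 i ^ (p ^ (2 * k) + 1) = 0} =
    Nat.card {s : (Fin 3 → F) × (Fin 3 → ZMod p) //
      (∀ i, s.2 i ≠ 0) ∧
      ∑ i, algebraMap (ZMod p) F (s.2 i) * s.1 i ^ 2 = 0 ∧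
      ∑ i, algebraMap (ZMod p) F (s.2 i) * s.1 i ^ (p ^ k + 1) = 0} := by
  classical
  have hm1 : 1 < m := by omega
  have hp2 : p ≠ 2 := by rintro rfl; revert hp; decide
  have h1p : 1 < p := (Fact.out : p.Prime).one_lt
  -- predicate equivalences
  have h3L : ∀ s : (Fin 3 → F) × (Fin 3 → ZMod p),
      ((∀ i, s.2 i ≠ 0) ∧
        ∑ i, algebraMap (ZMod p) F (s.2 i) * s.1 i ^ 2 = 0 ∧
        ∑ i, algebraMap (ZMod p) F (s.2 i) * s.1 i ^ (p ^ k + 1) = 0 ∧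
        ∑ i, algebraMap (ZMod p) F (s.2 i) * s.1 i ^ (p ^ (2 * k) + 1) = 0)
      ↔ ((∀ i, s.2 i ≠ 0) ∧ IsLine p F s.2 s.1) := by
    intro s
    constructor
    · rintro ⟨hy, e1, e2, _⟩
      exact ⟨hy, line_of_eqs hF hm1 hgcd hy e1 e2⟩
    · rintro ⟨hy, hline⟩
      obtain ⟨q1, q2, q3⟩ := line_eqs hline k
      exact ⟨hy, q1, q2, q3⟩
  have h2L : ∀ s : (Fin 3 → F) × (Fin 3 → ZMod p),
      ((∀ i, s.2 i ≠ 0) ∧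
        ∑ i, algebraMap (ZMod p) F (s.2 i) * s.1 i ^ 2 = 0 ∧
        ∑ i, algebraMap (ZMod p) F (s.2 i) * s.1 i ^ (p ^ k + 1) = 0)
      ↔ ((∀ i, s.2 i ≠ 0) ∧ IsLine p F s.2 s.1) := by
    intro s
    constructor
    · rintro ⟨hy, e1, e2⟩
      exact ⟨hy, line_of_eqs hF hm1 hgcd hy e1 e2⟩
    · rintro ⟨hy, hline⟩
      obtain ⟨q1, q2, _⟩ := line_eqs hline k
      exact ⟨hy, q1, q2⟩
  have hL : Nat.card {s : (Fin 3 → F) × (Fin 3 → ZMod p) //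
      (∀ i, s.2 i ≠ 0) ∧ IsLine p F s.2 s.1} = (p - 1) ^ 3 * ((p + 1) * (p ^ m - 1) + 1) := by
    rw [Nat.card_eq_fintype_card, Fintype.card_subtype]
    exact total_count hp2 hF
  have e3card := Nat.card_congr (Equiv.subtypeEquivRight h3L)
  have e2card := Nat.card_congr (Equiv.subtypeEquivRight h2L)
  have harith : (p + 1) * (p ^ m - 1) + 1 = p ^ (m + 1) + p ^ m - p := by
    obtain ⟨b, hb⟩ : ∃ b, p ^ m = b + 1 :=
      ⟨p ^ m - 1, by have := Nat.one_le_pow m p (by omega); omega⟩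
    have key : (p + 1) * (p ^ m - 1) + 1 + p = p ^ (m + 1) + p ^ m := by
      rw [hb, pow_succ, Nat.add_sub_cancel, hb]
      ring
    exact (Nat.sub_eq_of_eq_add key.symm).symm
  constructor
  · rw [e3card, hL, harith]
  · rw [e3card, e2card]
end

section
/- The number of pairs (u,v) ∈ F² such that D(u,v,0) = (p-1)·p^m is exactly 1 (namely (u,v) = (0,0)). -/
/-- `ζ_p^a = exp(2πi·ā/p)` for `a ∈ 𝔽_p`, where `ā ∈ {0,…,p-1}` lifts `a`. -/
noncomputable def zetaC (p : ℕ) (a : ZMod p) : ℂ :=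
  Complex.exp (2 * Real.pi * Complex.I * (a.val : ℂ) / (p : ℂ))

/-- `D(u,v,w) = ∑_{y ∈ 𝔽_p*} ∑_{x ∈ F} ζ_p^{y·Tr(ux² + vx^{p^k+1} + wx^{p^{2k}+1})}`. -/
noncomputable def Dsum (p k : ℕ) [NeZero p] (F : Type) [Field F] [Fintype F]
    [Algebra (ZMod p) F] (u v w : F) : ℂ :=
  ∑ y ∈ ({0}ᶜ : Finset (ZMod p)), ∑ x : F,
    zetaC p (y * Algebra.trace (ZMod p) F
      (u * x ^ 2 + v * x ^ (p ^ k + 1) + w * x ^ (p ^ (2 * k) + 1)))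

set_option linter.unusedSectionVars false

section ZetaFacts

lemma zetaC_eq (p : ℕ) (a : ZMod p) :
    zetaC p a = Complex.exp (((2 * Real.pi * (a.val : ℝ) / (p : ℝ) : ℝ) : ℂ) * Complex.I) := by
  unfold zetaC
  congr 1
  push_cast
  ring

lemma zetaC_re_le_one (p : ℕ) (a : ZMod p) : (zetaC p a).re ≤ 1 := by
  rw [zetaC_eq, Complex.exp_ofReal_mul_I_re]
  exact Real.cos_le_one _

lemma zetaC_zero (p : ℕ) [NeZero p] : zetaC p (0 : ZMod p) = 1 := by
  unfold zetaC
  simp [ZMod.val_zero]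

lemma zetaC_re_eq_one (p : ℕ) [Fact p.Prime] (a : ZMod p)
    (h : (zetaC p a).re = 1) : a = 0 := by
  rw [zetaC_eq, Complex.exp_ofReal_mul_I_re] at h
  obtain ⟨n, hn⟩ := (Real.cos_eq_one_iff _).mp h
  have hp : (0 : ℝ) < (p : ℝ) := by
    exact_mod_cast (Fact.out : p.Prime).pos
  have hpi : (0 : ℝ) < Real.pi := Real.pi_pos
  have hval : ((a.val : ℝ)) = (n : ℝ) * (p : ℝ) := by
    have h2 : (n : ℝ) * (2 * Real.pi) * (p : ℝ) = 2 * Real.pi * (a.val : ℝ) / (p : ℝ) * (p : ℝ) := by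
      rw [hn]
    rw [div_mul_cancel₀ _ (ne_of_gt hp)] at h2
    have h3 : 2 * Real.pi * ((n : ℝ) * (p : ℝ) - (a.val : ℝ)) = 0 := by linarith
    rcases mul_eq_zero.mp h3 with h' | h'
    · nlinarith
    · linarith
  have hvlt : a.val < p := ZMod.val_lt a
  have hZ : ((a.val : ℤ) : ℝ) = ((n * (p : ℤ) : ℤ) : ℝ) := by push_cast; exact_mod_cast hval
  have hZ' : (a.val : ℤ) = n * (p : ℤ) := by exact_mod_cast hZ
  have hp' : (0 : ℤ) < (p : ℤ) := by exact_mod_cast (Fact.out : p.Prime).pos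
  have h0 : (0 : ℤ) ≤ n * (p : ℤ) := by rw [← hZ']; positivity
  have h1 : n * (p : ℤ) < (p : ℤ) := by rw [← hZ']; exact_mod_cast hvlt
  have hn0 : n = 0 := by
    by_contra hne
    rcases lt_or_gt_of_ne hne with hlt | hgt
    · nlinarith
    · nlinarith
  have hval0 : a.val = 0 := by
    rw [hn0, zero_mul] at hZ'
    exact_mod_cast hZ'
  exact (ZMod.val_eq_zero a).mp hval0

end ZetaFacts

section Field

variable (p m k : ℕ) [Fact p.Prime] (F : Type) [Field F] [Fintype F] [Algebra (ZMod p) F]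

lemma charF : CharP F p := charP_of_injective_algebraMap (algebraMap (ZMod p) F).injective p

lemma pow_pm (hF : Fintype.card F = p ^ m) (x : F) : x ^ (p ^ m) = x := by
  rw [← hF]; exact FiniteField.pow_card x

lemma powred (hF : Fintype.card F = p ^ m) (x : F) (a b : ℕ) :
    x ^ (p ^ (a * m + b)) = x ^ (p ^ b) := by
  induction a with
  | zero => simp
  | succ a ih =>
    have e : (a + 1) * m + b = (a * m + b) + m := by ring
    rw [e, pow_add, pow_mul, pow_pm p m F hF, ih]

lemma frob_inj (j : ℕ) : Function.Injective (fun y : F => y ^ (p ^ j)) := by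
  haveI := charF p F
  intro a b hab
  simp only at hab
  have h : (a - b) ^ (p ^ j) = 0 := by rw [sub_pow_char_pow, hab, sub_self]
  have := pow_eq_zero_iff (pow_ne_zero j (Fact.out : p.Prime).ne_zero) |>.mp h
  exact sub_eq_zero.mp this

lemma exists_nonfixed (hF : Fintype.card F = p ^ m) (hm2 : 2 ≤ m) (j : ℕ) (hj : ¬ m ∣ j) :
    ∃ z : F, z ^ (p ^ j) ≠ z := by
  by_contra h
  push_neg at h
  set j0 := j % m with hj0def
  have hj0 : 0 < j0 := by
    rcases Nat.eq_zero_or_pos j0 with h0 | h0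
    · exact absurd (Nat.dvd_iff_mod_eq_zero.mpr h0) hj
    · exact h0
  have hj0m : j0 < m := Nat.mod_lt _ (by omega)
  have hdecomp : (j / m) * m + j % m = j := by
    rw [Nat.mul_comm]; exact Nat.div_add_mod j m
  have hred : ∀ z : F, z ^ (p ^ j0) = z := by
    intro z
    have h1 := h z
    rw [← hdecomp, powred p m F hF] at h1
    exact h1
  obtain ⟨g, hg⟩ := IsCyclic.exists_generator (α := Fˣ)
  have ho : orderOf g = p ^ m - 1 := by
    rw [orderOf_eq_card_of_forall_mem_zpowers hg, Nat.card_units,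
      Nat.card_eq_fintype_card, hF]
  have hgpow : g ^ (p ^ j0) = g := by
    have hv : ((g ^ (p ^ j0) : Fˣ) : F) = (g : F) := by
      rw [Units.val_pow_eq_pow_val]; exact hred (g : F)
    exact Units.ext hv
  have hone : g ^ (p ^ j0 - 1) = 1 := by
    have hple : 1 ≤ p ^ j0 := Nat.one_le_pow _ _ (Fact.out : p.Prime).pos
    have h2 : g ^ (p ^ j0 - 1) * g = 1 * g := by
      rw [one_mul, ← pow_succ, Nat.sub_add_cancel hple]
      exact hgpow
    exact mul_right_cancel h2
  have hdvd : p ^ m - 1 ∣ p ^ j0 - 1 := ho ▸ orderOf_dvd_of_pow_eq_one hone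
  have hp1 : 1 < p := (Fact.out : p.Prime).one_lt
  have hlt : p ^ j0 < p ^ m := Nat.pow_lt_pow_right hp1 hj0m
  have hpos : 0 < p ^ j0 - 1 := by
    have h3 : 1 < p ^ j0 := by
      calc 1 < p := hp1
      _ ≤ p ^ j0 := Nat.le_self_pow (by omega) p
    omega
  have := Nat.le_of_dvd hpos hdvd
  omega

/-- Frobenius as an algebra equivalence over `ZMod p`. -/
noncomputable def frobAlg : F ≃ₐ[ZMod p] F := by
  haveI := charF p F
  refine AlgEquiv.ofBijective
    { toRingHom := frobenius F p
      commutes' := fun c => by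
        show frobenius F p (algebraMap (ZMod p) F c) = algebraMap (ZMod p) F c
        rw [frobenius_def, ← map_pow, ZMod.pow_card] } ?_
  have hinj : Function.Injective (frobenius F p) := (frobenius F p).injective
  exact ⟨hinj, Finite.injective_iff_surjective.mp hinj⟩

lemma trace_frob (z : F) :
    Algebra.trace (ZMod p) F (z ^ p) = Algebra.trace (ZMod p) F z := by
  haveI := charF p F
  have e : z ^ p = frobAlg p F z := rfl
  rw [e, Algebra.trace_eq_of_algEquiv (frobAlg p F) z]

lemma trace_frob_iter (j : ℕ) (z : F) :
    Algebra.trace (ZMod p) F (z ^ (p ^ j)) = Algebra.trace (ZMod p) F z := by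
  induction j with
  | zero => simp
  | succ j ih =>
    rw [pow_succ, pow_mul, trace_frob p F, ih]

lemma trace_nondeg (c : F) (h : ∀ y : F, Algebra.trace (ZMod p) F (c * y) = 0) : c = 0 := by
  apply (traceForm_nondegenerate (ZMod p) F).1 c
  intro y
  simpa [Algebra.traceForm_apply] using h y

/-- Dedekind-style independence for `x, x^{p^s}, x^{p^t}`. -/
lemma ded (a b c : F) (s t : ℕ)
    (h : ∀ x : F, a * x + b * x ^ (p ^ s) + c * x ^ (p ^ t) = 0)
    (hs : ∃ z : F, z ^ (p ^ s) ≠ z)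
    (ht : ∃ z : F, z ^ (p ^ t) ≠ z)
    (hst : ∃ w : F, w ^ (p ^ t) ≠ w ^ (p ^ s)) :
    a = 0 ∧ b = 0 ∧ c = 0 := by
  have h2 : ∀ x z : F,
      b * x ^ (p ^ s) * (z ^ (p ^ s) - z) + c * x ^ (p ^ t) * (z ^ (p ^ t) - z) = 0 := by
    intro x z
    have hxz := h (x * z)
    have hx := h x
    rw [mul_pow, mul_pow] at hxz
    linear_combination hxz - z * hx
  have h3 : ∀ x w z : F,
      c * x ^ (p ^ t) * (w ^ (p ^ t) - w ^ (p ^ s)) * (z ^ (p ^ t) - z) = 0 := by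
    intro x w z
    have hxw := h2 (x * w) z
    rw [mul_pow, mul_pow] at hxw
    linear_combination hxw - w ^ (p ^ s) * h2 x z
  obtain ⟨z, hz⟩ := ht
  obtain ⟨w, hw⟩ := hst
  have hc : c = 0 := by
    have h4 := h3 1 w z
    rw [one_pow, mul_one] at h4
    rcases mul_eq_zero.mp h4 with h' | h'
    · rcases mul_eq_zero.mp h' with h'' | h''
      · exact h''
      · exact absurd (sub_eq_zero.mp h'') hw
    · exact absurd (sub_eq_zero.mp h') hz
  obtain ⟨z', hz'⟩ := hs
  have hb : b = 0 := by
    have h4 := h2 1 z'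
    rw [hc, one_pow, mul_one, zero_mul, zero_mul, add_zero] at h4
    rcases mul_eq_zero.mp h4 with h' | h'
    · exact h'
    · exact absurd (sub_eq_zero.mp h') hz'
  have ha : a = 0 := by
    have h4 := h 1
    rw [hb, hc, one_pow, mul_one, zero_mul, zero_mul, add_zero, add_zero] at h4
    exact h4
  exact ⟨ha, hb, hc⟩

/-- Main algebraic step: if `Tr(u x² + v x^{p^k+1}) = 0` for all `x`, then `u = v = 0`. -/
lemma main_alg (hp : Odd p) (hm5 : 5 ≤ m) (hm : Odd m) (hk : 0 < k)
    (hgcd : Nat.gcd m k = 1) (hF : Fintype.card F = p ^ m) (u v : F)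
    (hQ : ∀ x : F, Algebra.trace (ZMod p) F (u * x ^ 2 + v * x ^ (p ^ k + 1)) = 0) :
    u = 0 ∧ v = 0 := by
  haveI := charF p F
  set Tr := Algebra.trace (ZMod p) F with hTr
  -- polarization
  have hB : ∀ x y : F,
      Tr (2 * u * (x * y) + (v * (x ^ (p ^ k) * y) + v * (x * y ^ (p ^ k)))) = 0 := by
    intro x y
    have e : u * (x + y) ^ 2 + v * (x + y) ^ (p ^ k + 1) =
        (u * x ^ 2 + v * x ^ (p ^ k + 1)) + (u * y ^ 2 + v * y ^ (p ^ k + 1)) +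
        (2 * u * (x * y) + (v * (x ^ (p ^ k) * y) + v * (x * y ^ (p ^ k)))) := by
      have hxy : (x + y) ^ (p ^ k) = x ^ (p ^ k) + y ^ (p ^ k) := add_pow_char_pow ..
      rw [pow_succ, pow_succ, pow_succ, hxy]
      ring
    have h1 := hQ (x + y)
    rw [e, map_add, map_add, hQ x, hQ y, zero_add, zero_add] at h1
    exact h1
  set k' := k * (m - 1) with hk'def
  have hkk' : k + k' = k * m := by
    rcases m with _ | m'
    · omega
    · rw [hk'def]
      simp only [Nat.succ_sub_one]
      ring
  -- linear form vanishing
  have hL : ∀ x : F,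
      2 * u * x + v * x ^ (p ^ k) + v ^ (p ^ k') * x ^ (p ^ k') = 0 := by
    intro x
    apply trace_nondeg p F
    intro y
    have hshift : Tr (v ^ (p ^ k') * x ^ (p ^ k') * y) = Tr (v * (x * y ^ (p ^ k))) := by
      have e2 : (v * (x * y ^ (p ^ k))) ^ (p ^ k') =
          v ^ (p ^ k') * x ^ (p ^ k') * y := by
        have e3 : y ^ (p ^ (k * m)) = y := by
          have e4 := powred p m F hF y k 0
          simpa using e4
        rw [mul_pow, mul_pow, ← pow_mul, ← pow_add, hkk', e3]
        ring
      rw [← e2, hTr, trace_frob_iter]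
    have expand : (2 * u * x + v * x ^ (p ^ k) + v ^ (p ^ k') * x ^ (p ^ k')) * y =
        2 * u * (x * y) + v * (x ^ (p ^ k) * y) + v ^ (p ^ k') * x ^ (p ^ k') * y := by
      ring
    rw [expand, map_add, map_add, hshift]
    have h5 := hB x y
    rw [map_add, map_add] at h5
    linear_combination h5
  -- apply Frobenius^k to the relation
  have hL2 : ∀ x : F,
      v * x + 2 ^ (p ^ k) * u ^ (p ^ k) * x ^ (p ^ k) + v ^ (p ^ k) * x ^ (p ^ (2 * k)) = 0 := by
    intro x
    have h := hL x
    have h2 : (2 * u * x + v * x ^ (p ^ k) + v ^ (p ^ k') * x ^ (p ^ k')) ^ (p ^ k) = 0 := by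
      rw [h]
      exact zero_pow (pow_ne_zero k (Fact.out : p.Prime).ne_zero)
    rw [add_pow_char_pow, add_pow_char_pow] at h2
    simp only [mul_pow] at h2
    have e1 : (x ^ (p ^ k)) ^ (p ^ k) = x ^ (p ^ (2 * k)) := by
      rw [← pow_mul, ← pow_add, two_mul]
    have e2 : ∀ w : F, (w ^ (p ^ k')) ^ (p ^ k) = w := by
      intro w
      rw [← pow_mul, ← pow_add, Nat.add_comm k' k, hkk']
      have e4 := powred p m F hF w k 0
      simpa using e4
    rw [e1, e2, e2] at h2
    linear_combination h2
  -- non-fixed points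
  have hmk : ¬ m ∣ k := by
    intro hd
    have hg := Nat.gcd_eq_left hd
    rw [hgcd] at hg
    omega
  have hm2k : ¬ m ∣ 2 * k := by
    intro hd
    have hcop : Nat.Coprime m 2 := Nat.coprime_two_right.mpr hm
    exact hmk (hcop.dvd_of_dvd_mul_left hd)
  have hsk := exists_nonfixed p m F hF (by omega) k hmk
  have hs2k := exists_nonfixed p m F hF (by omega) (2 * k) hm2k
  have hst : ∃ w : F, w ^ (p ^ (2 * k)) ≠ w ^ (p ^ k) := by
    obtain ⟨w, hw⟩ := hsk
    refine ⟨w, fun heq => hw ?_⟩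
    apply frob_inj p F k
    show (w ^ p ^ k) ^ p ^ k = w ^ p ^ k
    rw [← pow_mul, ← pow_add, ← two_mul]
    exact heq
  obtain ⟨ha, hb, hc⟩ := ded p F v (2 ^ (p ^ k) * u ^ (p ^ k)) (v ^ (p ^ k)) k (2 * k)
    hL2 hsk hs2k hst
  refine ⟨?_, ha⟩
  have h2ne : (2 : F) ≠ 0 := by
    intro h20
    have : ((2 : ℕ) : F) = 0 := by exact_mod_cast h20
    have hdvd := (CharP.cast_eq_zero_iff F p 2).mp this
    have hle2 := Nat.le_of_dvd (by norm_num) hdvd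
    have h1p : 1 < p := (Fact.out : p.Prime).one_lt
    have hodd := Nat.odd_iff.mp hp
    omega
  rcases mul_eq_zero.mp hb with h' | h'
  · exact absurd (pow_eq_zero_iff (pow_ne_zero k (Fact.out : p.Prime).ne_zero) |>.mp h') h2ne
  · exact pow_eq_zero_iff (pow_ne_zero k (Fact.out : p.Prime).ne_zero) |>.mp h'

end Field

set_option maxHeartbeats 1000000 in
/-- The number of pairs `(u,v) ∈ F²` with `D(u,v,0) = (p-1)·p^m` is exactly `1`. -/
theorem stmt_9 (p m k : ℕ) [Fact p.Prime] (hp : Odd p) (hm5 : 5 ≤ m) (hm : Odd m)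
    (hk : 0 < k) (hgcd : Nat.gcd m k = 1)
    (F : Type) [Field F] [Fintype F] [Algebra (ZMod p) F]
    (hF : Fintype.card F = p ^ m) :
    Nat.card {uv : F × F //
      Dsum p k F uv.1 uv.2 0 = ((p : ℂ) - 1) * (p : ℂ) ^ m} = 1 := by
  have hp1 : 1 < p := (Fact.out : p.Prime).one_lt
  -- the trivial pair works
  have hzero : Dsum p k F 0 0 0 = ((p : ℂ) - 1) * (p : ℂ) ^ m := by
    unfold Dsum
    simp only [zero_mul, add_zero, zero_add, map_zero, mul_zero, zetaC_zero]
    simp only [Finset.sum_const, Finset.card_univ, hF, Finset.card_compl,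
      Finset.card_singleton, ZMod.card, nsmul_eq_mul, mul_one]
    push_cast [Nat.cast_sub (le_of_lt hp1)]
    ring
  -- forcing: any solution has zero trace form
  have hforce : ∀ u v : F, Dsum p k F u v 0 = ((p : ℂ) - 1) * (p : ℂ) ^ m →
      ∀ x : F, Algebra.trace (ZMod p) F (u * x ^ 2 + v * x ^ (p ^ k + 1)) = 0 := by
    intro u v hD x
    set f : ZMod p × F → ℂ := fun i =>
      zetaC p (i.1 * Algebra.trace (ZMod p) F
        (u * i.2 ^ 2 + v * i.2 ^ (p ^ k + 1) + 0 * i.2 ^ (p ^ (2 * k) + 1))) with hf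
    set s : Finset (ZMod p × F) := ({0}ᶜ : Finset (ZMod p)) ×ˢ Finset.univ with hs
    have hDs : ∑ i ∈ s, f i = ((p : ℂ) - 1) * (p : ℂ) ^ m := by
      rw [hs, Finset.sum_product]
      exact hD
    have hcard : s.card = (p - 1) * p ^ m := by
      rw [hs, Finset.card_product, Finset.card_compl, Finset.card_singleton, ZMod.card,
        Finset.card_univ, hF]
    have hRHSre : (((p : ℂ) - 1) * (p : ℂ) ^ m) = ((((p : ℝ) - 1) * (p : ℝ) ^ m : ℝ) : ℂ) := by
      push_cast
      ring
    have hre : ∑ i ∈ s, (f i).re = ((p : ℝ) - 1) * (p : ℝ) ^ m := by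
      have h' := congrArg Complex.re hDs
      rw [Complex.re_sum] at h'
      rw [h', hRHSre, Complex.ofReal_re]
    have hle : ∀ i ∈ s, (f i).re ≤ 1 := fun i _ => zetaC_re_le_one p _
    have hall : ∀ i ∈ s, (f i).re = 1 := by
      by_contra hcon
      push_neg at hcon
      obtain ⟨i, hi, hne⟩ := hcon
      have hlt : ∑ i ∈ s, (f i).re < ∑ _i ∈ s, (1 : ℝ) :=
        Finset.sum_lt_sum hle ⟨i, hi, lt_of_le_of_ne (hle i hi) hne⟩
      rw [Finset.sum_const, nsmul_eq_mul, mul_one, hcard, hre] at hlt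
      have : ((p - 1) * p ^ m : ℕ) = ((p : ℝ) - 1) * (p : ℝ) ^ m := by
        push_cast [Nat.cast_sub (le_of_lt hp1)]
        ring
      rw [this] at hlt
      exact lt_irrefl _ hlt
    have h1mem : ((1 : ZMod p), x) ∈ s := by
      rw [hs, Finset.mem_product]
      exact ⟨Finset.mem_compl.mpr (by simp), Finset.mem_univ x⟩
    have := zetaC_re_eq_one p _ (hall _ h1mem)
    rw [one_mul] at this
    rw [zero_mul, add_zero] at this
    exact this
  -- characterize the solution set
  have hiff : ∀ uv : F × F,
      Dsum p k F uv.1 uv.2 0 = ((p : ℂ) - 1) * (p : ℂ) ^ m ↔ uv = (0, 0) := by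
    intro uv
    constructor
    · intro h
      obtain ⟨hu, hv⟩ := main_alg p m k F hp hm5 hm hk hgcd hF uv.1 uv.2 (hforce _ _ h)
      exact Prod.ext hu hv
    · rintro rfl
      exact hzero
  rw [Nat.card_eq_one_iff_unique]
  constructor
  · constructor
    rintro ⟨a, ha⟩ ⟨b, hb⟩
    exact Subtype.ext (((hiff a).mp ha).trans ((hiff b).mp hb).symm)
  · exact ⟨⟨(0, 0), (hiff _).mpr rfl⟩⟩
end
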